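/- Let N+ be a rooted binary phylogenetic network on taxon set X with |X| ≥ 4, and let {a,b,c,d} ⊆ X be a T-quartet on N+ whose associated resolved quartet is ab|cd. Then {a,b,c,d} is also a T-quartet on the induced 4-taxon network N+_{a,b,c,d}, with the same associated resolved quartet ab|cd. -/

import Mathlib

/-!
# Common framework

Finite directed multigraphs, undirected connectivity, numbers of connected
components, cut edges, subgraphs, blobs, blobs determined by leaf sets,
B-quartets, and quartets displayed via cut-edge separation.

A *network* is modelled as a finite directed multigraph (edge directions are
simply ignored for the undirected notions of connectivity, cut edges and
blobs).
-/

/-- A finite directed multigraph: finite types of nodes and of edges, with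
source and target maps. -/
structure MDigraph where
  V : Type
  E : Type
  finV : Finite V
  finE : Finite E
  src : E → V
  tgt : E → V

attribute [instance] MDigraph.finV MDigraph.finE

namespace MDigraph

section Basic

variable (G : MDigraph)

/-- One undirected step between `u` and `v` along an edge from the set `F`. -/
def Step (F : Set G.E) (u v : G.V) : Prop :=
  ∃ e ∈ F, (G.src e = u ∧ G.tgt e = v) ∨ (G.src e = v ∧ G.tgt e = u)

/-- Undirected reachability (an undirected path) using only edges in `F`. -/
def Conn (F : Set G.E) (u v : G.V) : Prop :=
  Relation.ReflTransGen (G.Step F) u v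

/-- One directed step from `u` to `v` along an edge from the set `F`. -/
def DStep (F : Set G.E) (u v : G.V) : Prop :=
  ∃ e ∈ F, G.src e = u ∧ G.tgt e = v

/-- Directed reachability (a directed path) using only edges in `F`. -/
def DConn (F : Set G.E) (u v : G.V) : Prop :=
  Relation.ReflTransGen (G.DStep F) u v

/-- `u` is above (ancestral to) `v`: there is a directed path from `u` to `v`. -/
def Above (u v : G.V) : Prop := G.DConn Set.univ u v

/-- In-degree of a node. -/
noncomputable def inDeg (v : G.V) : ℕ := Nat.card {e : G.E // G.tgt e = v}

/-- Out-degree of a node. -/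
noncomputable def outDeg (v : G.V) : ℕ := Nat.card {e : G.E // G.src e = v}

/-- Undirected degree of a node (a loop counts twice). -/
noncomputable def degree (v : G.V) : ℕ := G.inDeg v + G.outDeg v

/-- The number of connected components of the graph with node set `W` and edge
set the restriction to `W` of `F` (two nodes of `W` lie in the same connected
component iff they are joined by an undirected path). -/
noncomputable def numComponents (W : Set G.V) (F : Set G.E) : ℕ :=
  Nat.card (Quot (fun u v : W => G.Step {e ∈ F | G.src e ∈ W ∧ G.tgt e ∈ W} u.1 v.1))

/-- `v` lies on every directed path from `u` to `w`: there is no directed path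
from `u` to `w` all of whose nodes avoid `v`. -/
def OnEveryPath (v u w : G.V) : Prop :=
  ¬ (u ≠ v ∧ w ≠ v ∧
      Relation.ReflTransGen (fun a b => G.DStep Set.univ a b ∧ a ≠ v ∧ b ≠ v) u w)

end Basic

/-- A subgraph (subnetwork): a set of nodes together with a set of edges
joining them. -/
structure Subgraph (G : MDigraph) where
  verts : Set G.V
  edges : Set G.E
  src_mem : ∀ e ∈ edges, G.src e ∈ verts
  tgt_mem : ∀ e ∈ edges, G.tgt e ∈ verts

/-- The whole graph, as a subgraph of itself. -/
def top (G : MDigraph) : Subgraph G :=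
  ⟨Set.univ, Set.univ, fun _ _ => Set.mem_univ _, fun _ _ => Set.mem_univ _⟩

namespace Subgraph

variable {G : MDigraph}

/-- Containment of subgraphs. -/
def le (H K : Subgraph G) : Prop := H.verts ⊆ K.verts ∧ H.edges ⊆ K.edges

/-- The subgraph `H` is connected. -/
def IsConnected (H : Subgraph G) : Prop :=
  H.verts.Nonempty ∧ ∀ u ∈ H.verts, ∀ v ∈ H.verts, G.Conn H.edges u v

/-- Delete an edge from a subgraph. -/
def deleteEdge (H : Subgraph G) (e : G.E) : Subgraph G :=
  ⟨H.verts, H.edges \ {e}, fun e' he' => H.src_mem e' he'.1,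
    fun e' he' => H.tgt_mem e' he'.1⟩

/-- The number of connected components of a subgraph. -/
noncomputable def numComponents (H : Subgraph G) : ℕ :=
  G.numComponents H.verts H.edges

/-- `e` is a cut edge of the (sub)graph `H`: deleting it increases the number
of connected components. -/
def IsCutEdge (H : Subgraph G) (e : G.E) : Prop :=
  e ∈ H.edges ∧ H.numComponents < (H.deleteEdge e).numComponents

end Subgraph

variable {G : MDigraph}

/-- `B` is a blob of the network `H`: a maximal connected subnetwork of `H`
having no cut edges.  (A blob is *trivial* if it consists of a single node.) -/
def IsBlobIn (H B : Subgraph G) : Prop :=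
  B.le H ∧ B.IsConnected ∧ (∀ e, ¬ B.IsCutEdge e) ∧
    ∀ B' : Subgraph G, B'.le H → B'.IsConnected → (∀ e, ¬ B'.IsCutEdge e) →
      B.le B' → B'.le B

/-- `e` is a cut edge of the network `H` incident to the blob `B`: exactly one
of its endpoints is a node of `B`. -/
def IncidentCut (H B : Subgraph G) (e : G.E) : Prop :=
  H.IsCutEdge e ∧ Xor' (G.src e ∈ B.verts) (G.tgt e ∈ B.verts)

/-- The blob `B` of the network `H` is determined by the set `S` of leaf
labels: deletion of the cut edges of `H` incident to `B` leaves the nodes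
labelled by the elements of `S` in distinct connected components. -/
def DeterminesIn {X : Type} (H B : Subgraph G) (leaf : X → G.V) (S : Set X) : Prop :=
  ∀ s ∈ S, ∀ t ∈ S, s ≠ t →
    ¬ G.Conn {e ∈ H.edges | ¬ IncidentCut H B e} (leaf s) (leaf t)

/-- Four taxa form a B-quartet on the network `H`: some blob of `H` is
determined by them. -/
def BQuartetIn {X : Type} (H : Subgraph G) (leaf : X → G.V) (a b c d : X) : Prop :=
  ∃ B : Subgraph G, IsBlobIn H B ∧ DeterminesIn H B leaf ({a, b, c, d} : Set X)

/-- Some cut edge of `H` separates the taxa `p, q` from the taxa `r, s`: after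
its deletion `p, q` lie in one connected component and `r, s` in another.  For
a 4-taxon set `{p,q,r,s}` this says exactly that the (reduced unrooted) tree of
blobs of `H` displays the resolved quartet `pq|rs` (the edges of the tree of
blobs correspond exactly to the cut edges of the network, and suppressing
degree-2 nodes or contracting blobs does not affect which taxa a cut edge
separates). -/
def CutSep {X : Type} (H : Subgraph G) (leaf : X → G.V) (p q r s : X) : Prop :=
  ∃ e, H.IsCutEdge e ∧
    G.Conn (H.edges \ {e}) (leaf p) (leaf q) ∧
    G.Conn (H.edges \ {e}) (leaf r) (leaf s) ∧
    ¬ G.Conn (H.edges \ {e}) (leaf p) (leaf r)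

end MDigraph
open MDigraph in
/-- A rooted binary phylogenetic network on the taxon set `X`: a connected
directed acyclic graph whose node set consists of a root (in-degree 0,
out-degree 2), leaves (in-degree 1, out-degree 0) bijectively labelled by `X`,
tree nodes (in-degree 1, out-degree 2) and hybrid nodes (in-degree 2,
out-degree 1). -/
structure PhyloNetwork (X : Type) extends MDigraph where
  root : toMDigraph.V
  leaf : X → toMDigraph.V
  leaf_inj : Function.Injective leaf
  root_in : toMDigraph.inDeg root = 0
  root_out : toMDigraph.outDeg root = 2
  leaf_in : ∀ x, toMDigraph.inDeg (leaf x) = 1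
  leaf_out : ∀ x, toMDigraph.outDeg (leaf x) = 0
  internal : ∀ v, v ≠ root → (∀ x, v ≠ leaf x) →
      (toMDigraph.inDeg v = 1 ∧ toMDigraph.outDeg v = 2) ∨
      (toMDigraph.inDeg v = 2 ∧ toMDigraph.outDeg v = 1)
  acyclic : ∀ v, ¬ Relation.TransGen (toMDigraph.DStep Set.univ) v v
  conn : ∀ u v, toMDigraph.Conn Set.univ u v

namespace PhyloNetwork

open MDigraph

variable {X : Type} (N : PhyloNetwork X)

/-- The subnetwork of `N⁺` consisting of all nodes and edges ancestral to at
least one taxon in `Y`.  Since suppressing nodes of in- and out-degree 1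
affects neither blobs, nor cut edges, nor which sets of taxa they separate,
this subnetwork faithfully represents the induced network `N⁺_Y`. -/
def inducedSub (Y : Set X) : Subgraph N.toMDigraph where
  verts := {v | ∃ y ∈ Y, N.toMDigraph.Above v (N.leaf y)}
  edges := {e | ∃ y ∈ Y, N.toMDigraph.Above (N.toMDigraph.tgt e) (N.leaf y)}
  src_mem := by
    rintro e ⟨y, hy, h⟩
    exact ⟨y, hy, Relation.ReflTransGen.head ⟨e, Set.mem_univ e, rfl, rfl⟩ h⟩
  tgt_mem := by
    rintro e ⟨y, hy, h⟩
    exact ⟨y, hy, h⟩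

/-- `v` is a stable ancestor of the leaves: it is ancestral to every leaf and
lies on every directed path from the root to any leaf. -/
def IsStableAncestor (v : N.toMDigraph.V) : Prop :=
  (∀ x, N.toMDigraph.Above v (N.leaf x)) ∧
  ∀ x, N.toMDigraph.OnEveryPath v N.root (N.leaf x)

/-- `v` is the lowest stable ancestor (LSA) of the network: a stable ancestor
below all stable ancestors. -/
def IsLSA (v : N.toMDigraph.V) : Prop :=
  N.IsStableAncestor v ∧ ∀ u, N.IsStableAncestor u → N.toMDigraph.Above u v

/-- The number of cut edges of `N⁺` incident to the blob `B`. -/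
noncomputable def blobDeg (B : Subgraph N.toMDigraph) : ℕ :=
  Nat.card {e : N.toMDigraph.E // IncidentCut (top N.toMDigraph) B e}

/-- `B` is an `m`-blob of the rooted network `N⁺`: if the root is not in `B`
then `B` has exactly `m` incident cut edges, while if the root is in `B` then
`B` has exactly `m - 1` incident cut edges. -/
def IsMBlob (B : Subgraph N.toMDigraph) (m : ℕ) : Prop :=
  IsBlobIn (top N.toMDigraph) B ∧
    ((N.root ∈ B.verts ∧ m = N.blobDeg B + 1) ∨ (N.root ∉ B.verts ∧ m = N.blobDeg B))

end PhyloNetwork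

open MDigraph

section Helpers

open Relation

namespace MDigraph

variable {G : MDigraph}

lemma step_symm {F : Set G.E} {u v : G.V} (h : G.Step F u v) : G.Step F v u := by
  obtain ⟨e, he, hc⟩ := h
  exact ⟨e, he, hc.symm⟩

lemma conn_symm {F : Set G.E} {u v : G.V} (h : G.Conn F u v) : G.Conn F v u :=
  by
  haveI : Std.Symm (G.Step F) := ⟨fun _ _ h => step_symm h⟩
  exact Std.Symm.symm (r := ReflTransGen (G.Step F)) u v h

lemma conn_mono {F F' : Set G.E} (hFF : F ⊆ F') {u v : G.V}
    (h : G.Conn F u v) : G.Conn F' u v :=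
  ReflTransGen.mono (r := G.Step F) (p := G.Step F') (fun _ _ ⟨e, he, hc⟩ => ⟨e, hFF he, hc⟩) _ _ h

lemma conn_of_dconn {F : Set G.E} {u v : G.V} (h : G.DConn F u v) : G.Conn F u v :=
  ReflTransGen.mono (r := G.DStep F) (p := G.Step F) (fun _ _ ⟨e, he, hs, ht⟩ => ⟨e, he, Or.inl ⟨hs, ht⟩⟩) _ _ h

lemma eqvGen_of_conn {W : Set G.V} {F : Set G.E}
    (hW : ∀ f ∈ F, G.src f ∈ W ∧ G.tgt f ∈ W) {u v : G.V}
    (hu : u ∈ W) (hv : v ∈ W) (h : G.Conn F u v) :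
    EqvGen (fun a b : W => G.Step F a.1 b.1) ⟨u, hu⟩ ⟨v, hv⟩ := by
  have key : ∀ {w : G.V}, G.Conn F u w → ∀ hw : w ∈ W,
      EqvGen (fun a b : W => G.Step F a.1 b.1) ⟨u, hu⟩ ⟨w, hw⟩ := by
    intro w h
    induction h with
    | refl => intro hw; exact EqvGen.refl _
    | @tail x w h1 h2 ih =>
      intro hw
      have hxW : x ∈ W := by
        obtain ⟨f, hf, hc⟩ := h2
        rcases hc with ⟨hs, _⟩ | ⟨_, ht⟩
        · exact hs ▸ (hW f hf).1
        · exact ht ▸ (hW f hf).2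
      exact EqvGen.trans _ _ _ (ih hxW) (EqvGen.rel _ _ h2)
  exact key h hv

lemma conn_of_eqvGen {W : Set G.V} {F : Set G.E} {u v : W}
    (h : EqvGen (fun a b : W => G.Step F a.1 b.1) u v) :
    G.Conn F u.1 v.1 := by
  induction h with
  | rel x y h => exact ReflTransGen.single h
  | refl x => exact ReflTransGen.refl
  | symm x y h ih => exact conn_symm ih
  | trans x y z h1 h2 ih1 ih2 => exact ih1.trans ih2

lemma quot_card_lt {α : Type} [Finite α] {r r' : α → α → Prop}
    (himp : ∀ x y, r' x y → r x y) {u v : α}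
    (h1 : EqvGen r u v) (h2 : ¬ EqvGen r' u v) :
    Nat.card (Quot r) < Nat.card (Quot r') := by
  let f : Quot r' → Quot r := Quot.map id himp
  have hsurj : Function.Surjective f :=
    fun q => Quot.inductionOn q (fun x => ⟨Quot.mk r' x, rfl⟩)
  have hle : Nat.card (Quot r) ≤ Nat.card (Quot r') :=
    Nat.card_le_card_of_surjective f hsurj
  refine hle.lt_of_ne fun heq => ?_
  have hbij : Function.Bijective f :=
    (Nat.bijective_iff_surjective_and_card f).mpr ⟨hsurj, heq.symm⟩
  have hmk : f (Quot.mk r' u) = f (Quot.mk r' v) := by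
    show Quot.mk r u = Quot.mk r v
    exact Quot.eq.mpr h1
  exact h2 (Quot.eq.mp (hbij.injective hmk))

lemma quot_card_le {α : Type} [Finite α] {r r' : α → α → Prop}
    (himp : ∀ x y, r' x y → r x y)
    (hrev : ∀ x y, EqvGen r x y → EqvGen r' x y) :
    Nat.card (Quot r') ≤ Nat.card (Quot r) := by
  let f : Quot r' → Quot r := Quot.map id himp
  have hinj : Function.Injective f := by
    intro q1 q2
    refine Quot.inductionOn q1 (fun x => Quot.inductionOn q2 (fun y h => ?_))
    have h' : Quot.mk r x = Quot.mk r y := h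
    exact Quot.eq.mpr (hrev x y (Quot.eq.mp h'))
  exact Nat.card_le_card_of_injective f hinj

lemma conn_remove_edge {F : Set G.E} {e : G.E}
    (hse : G.Conn (F \ {e}) (G.src e) (G.tgt e)) :
    ∀ {u v : G.V}, G.Conn F u v → G.Conn (F \ {e}) u v := by
  intro u v h
  induction h with
  | refl => exact ReflTransGen.refl
  | tail h1 h2 ih =>
    obtain ⟨f, hf, hc⟩ := h2
    by_cases hfe : f = e
    · subst hfe
      rcases hc with ⟨hs, ht⟩ | ⟨hs, ht⟩
      · exact ih.trans (hs ▸ ht ▸ hse)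
      · exact ih.trans (hs ▸ ht ▸ conn_symm hse)
    · exact ih.tail ⟨f, ⟨hf, by simp [hfe]⟩, hc⟩

lemma numComp_eq (H : Subgraph G) :
    H.numComponents = Nat.card (Quot (fun u v : H.verts => G.Step H.edges u.1 v.1)) := by
  have hs : {f ∈ H.edges | G.src f ∈ H.verts ∧ G.tgt f ∈ H.verts} = H.edges := by
    ext f
    exact ⟨fun h => h.1, fun h => ⟨h, H.src_mem f h, H.tgt_mem f h⟩⟩
  unfold Subgraph.numComponents MDigraph.numComponents
  rw [hs]

lemma numComp_del_eq (H : Subgraph G) (e : G.E) :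
    (H.deleteEdge e).numComponents =
      Nat.card (Quot (fun u v : H.verts => G.Step (H.edges \ {e}) u.1 v.1)) := by
  have hs : {f ∈ H.edges \ {e} | G.src f ∈ H.verts ∧ G.tgt f ∈ H.verts} = H.edges \ {e} := by
    ext f
    exact ⟨fun h => h.1, fun h => ⟨h, H.src_mem f h.1, H.tgt_mem f h.1⟩⟩
  unfold Subgraph.numComponents MDigraph.numComponents Subgraph.deleteEdge
  rw [hs]

lemma isCutEdge_of {H : Subgraph G} {e : G.E} (he : e ∈ H.edges)
    {u v : G.V} (hu : u ∈ H.verts) (hv : v ∈ H.verts)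
    (h1 : G.Conn H.edges u v) (h2 : ¬ G.Conn (H.edges \ {e}) u v) :
    H.IsCutEdge e := by
  refine ⟨he, ?_⟩
  rw [numComp_eq H, numComp_del_eq H e]
  refine quot_card_lt (u := ⟨u, hu⟩) (v := ⟨v, hv⟩)
    (fun x y ⟨f, hf, hc⟩ => ⟨f, hf.1, hc⟩) ?_ ?_
  · exact eqvGen_of_conn (fun f hf => ⟨H.src_mem f hf, H.tgt_mem f hf⟩) hu hv h1
  · intro hE
    exact h2 (conn_of_eqvGen hE)

lemma top_cut_sep {e : G.E} (h : (top G).IsCutEdge e) :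
    ¬ G.Conn (Set.univ \ {e}) (G.src e) (G.tgt e) := by
  intro hc
  have hle : ((top G).deleteEdge e).numComponents ≤ (top G).numComponents := by
    rw [numComp_del_eq (top G) e, numComp_eq (top G)]
    refine quot_card_le (fun x y ⟨f, hf, hcc⟩ => ⟨f, hf.1, hcc⟩) ?_
    intro x y hE
    have hconn : G.Conn ((top G).edges) x.1 y.1 := conn_of_eqvGen hE
    have hconn' : G.Conn ((top G).edges \ {e}) x.1 y.1 := conn_remove_edge hc hconn
    exact eqvGen_of_conn (W := (top G).verts) (fun f _ => ⟨Set.mem_univ _, Set.mem_univ _⟩) x.2 y.2 hconn'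
  exact absurd h.2 (not_lt.mpr hle)

lemma walk_split {F F' : Set G.E} {p q : G.V} (h : G.Conn F p q) :
    G.Conn (F ∩ F') p q ∨
      ∃ u f, G.Conn (F ∩ F') p u ∧ f ∈ F ∧ f ∉ F' ∧ (G.src f = u ∨ G.tgt f = u) := by
  induction h with
  | refl => exact Or.inl ReflTransGen.refl
  | @tail x w h1 h2 ih =>
    rcases ih with ih | ih
    · obtain ⟨f, hf, hc⟩ := h2
      by_cases hf' : f ∈ F'
      · exact Or.inl (ih.tail ⟨f, ⟨hf, hf'⟩, hc⟩)
      · refine Or.inr ⟨x, f, ih, hf, hf', ?_⟩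
        rcases hc with ⟨hs, _⟩ | ⟨_, ht⟩
        · exact Or.inl hs
        · exact Or.inr ht
    · exact Or.inr ih

lemma blob_conn_del {B : Subgraph G} (hconn : B.IsConnected)
    (hnc : ∀ f, ¬ B.IsCutEdge f) (e : G.E) :
    ∀ u ∈ B.verts, ∀ v ∈ B.verts, G.Conn (B.edges \ {e}) u v := by
  by_cases he : e ∈ B.edges
  · obtain ⟨w, hw⟩ := hconn.1
    haveI : Nonempty (Quot (fun u v : B.verts => G.Step (B.edges \ {e}) u.1 v.1)) :=
      ⟨Quot.mk _ ⟨w, hw⟩⟩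
    have h1 : B.numComponents = 1 := by
      rw [numComp_eq]
      rw [Nat.card_eq_one_iff_unique]
      refine ⟨⟨fun q1 q2 => ?_⟩, ⟨Quot.mk _ ⟨w, hw⟩⟩⟩
      refine Quot.inductionOn q1 (fun x => Quot.inductionOn q2 (fun y => ?_))
      exact Quot.eq.mpr (eqvGen_of_conn
        (fun f hf => ⟨B.src_mem f hf, B.tgt_mem f hf⟩) x.2 y.2
        (hconn.2 x.1 x.2 y.1 y.2))
    have h2 : (B.deleteEdge e).numComponents ≤ 1 := by
      have hn : ¬ B.numComponents < (B.deleteEdge e).numComponents :=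
        fun hlt => hnc e ⟨he, hlt⟩
      omega
    rw [numComp_del_eq] at h2
    have hcard : Nat.card (Quot (fun u v : B.verts => G.Step (B.edges \ {e}) u.1 v.1)) = 1 :=
      le_antisymm h2 Nat.card_pos
    have hsub := (Nat.card_eq_one_iff_unique.mp hcard).1
    intro u hu v hv
    have heq : Quot.mk (fun a b : B.verts => G.Step (B.edges \ {e}) a.1 b.1) ⟨u, hu⟩ =
        Quot.mk (fun a b : B.verts => G.Step (B.edges \ {e}) a.1 b.1) ⟨v, hv⟩ :=
      @Subsingleton.elim _ hsub _ _
    exact conn_of_eqvGen (Quot.eq.mp heq)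
  · intro u hu v hv
    refine conn_mono ?_ (hconn.2 u hu v hv)
    intro f hf
    exact ⟨hf, fun hfe => he (Set.mem_singleton_iff.mp hfe ▸ hf)⟩

lemma cutSep_not_bquartet {X : Type} {H : Subgraph G} {leaf : X → G.V}
    {a b c d : X} (hab : a ≠ b) (hcd : c ≠ d)
    (hq : CutSep H leaf a b c d) : ¬ BQuartetIn H leaf a b c d := by
  rintro ⟨B, ⟨hle, hconn, hnc, _⟩, hdet⟩
  obtain ⟨e, hcut, h1, h2, h3⟩ := hq
  have hBd := blob_conn_del hconn hnc e
  have find : ∀ p q : X, p ∈ ({a, b, c, d} : Set X) → q ∈ ({a, b, c, d} : Set X) →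
      p ≠ q → G.Conn (H.edges \ {e}) (leaf p) (leaf q) →
      ∃ z ∈ B.verts, G.Conn (H.edges \ {e}) (leaf p) z := by
    intro p q hp hq' hpq hpq_conn
    rcases walk_split (F' := {f | ¬ IncidentCut H B f}) hpq_conn with
      hgood | ⟨u, f, hcu, hfF, hfF', hend⟩
    · exfalso
      refine hdet p hp q hq' hpq (conn_mono ?_ hgood)
      intro f hf
      exact ⟨hf.1.1, hf.2⟩
    · have hinc : IncidentCut H B f := not_not.mp hfF'
      have hcu' : G.Conn (H.edges \ {e}) (leaf p) u :=
        conn_mono Set.inter_subset_left hcu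
      have hstep : G.Step (H.edges \ {e}) (G.src f) (G.tgt f) := ⟨f, hfF, Or.inl ⟨rfl, rfl⟩⟩
      have hcs : G.Conn (H.edges \ {e}) (leaf p) (G.src f) ∧
          G.Conn (H.edges \ {e}) (leaf p) (G.tgt f) := by
        rcases hend with h | h
        · exact ⟨by rw [h]; exact hcu', (by rw [h]; exact hcu' : G.Conn _ _ (G.src f)).tail hstep⟩
        · exact ⟨(by rw [h]; exact hcu' : G.Conn _ _ (G.tgt f)).tail (step_symm hstep),
            by rw [h]; exact hcu'⟩
      rcases hinc.2 with ⟨hs, _⟩ | ⟨ht, _⟩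
      · exact ⟨G.src f, hs, hcs.1⟩
      · exact ⟨G.tgt f, ht, hcs.2⟩
  obtain ⟨z1, hz1, hc1⟩ := find a b (by simp) (by simp) hab h1
  obtain ⟨z2, hz2, hc2⟩ := find c d (by simp) (by simp) hcd h2
  have hz12 : G.Conn (H.edges \ {e}) z1 z2 := by
    refine conn_mono ?_ (hBd z1 hz1 z2 hz2)
    intro f hf
    exact ⟨hle.2 hf.1, hf.2⟩
  exact h3 ((hc1.trans hz12).trans (conn_symm hc2))

lemma dconn_restrict {w v : G.V} (h : G.DConn Set.univ v w) :
    G.DConn {f | G.DConn Set.univ (G.tgt f) w} v w := by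
  induction h using Relation.ReflTransGen.head_induction_on with
  | refl => exact ReflTransGen.refl
  | head hstep htail ih =>
    obtain ⟨f, _, hs, ht⟩ := hstep
    refine ReflTransGen.head ⟨f, ?_, hs, ht⟩ ih
    show G.DConn Set.univ (G.tgt f) w
    rw [ht]
    exact htail

lemma dconn_split {F : Set G.E} {e : G.E} {u v : G.V} (h : G.DConn F u v) :
    G.DConn (F \ {e}) u v ∨
      (e ∈ F ∧ G.DConn (F \ {e}) u (G.src e) ∧ G.DConn (F \ {e}) (G.tgt e) v) := by
  induction h with
  | refl => exact Or.inl ReflTransGen.refl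
  | @tail x w h1 h2 ih =>
    obtain ⟨f, hfF, hs, ht⟩ := h2
    by_cases hfe : f = e
    · subst hfe
      refine Or.inr ⟨hfF, ?_, ?_⟩
      · rcases ih with ih | ⟨_, ih, _⟩
        · rw [hs]; exact ih
        · exact ih
      · rw [ht]
        exact Relation.ReflTransGen.refl
    · have hstep : G.DStep (F \ {e}) x w := ⟨f, ⟨hfF, by simp [hfe]⟩, hs, ht⟩
      rcases ih with ih | ⟨he, ih1, ih2⟩
      · exact Or.inl (ih.tail hstep)
      · exact Or.inr ⟨he, ih1, ih2.tail hstep⟩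

end MDigraph

open MDigraph in
lemma PhyloNetwork.root_above {X : Type} (N : PhyloNetwork X) (v : N.toMDigraph.V) :
    N.toMDigraph.DConn Set.univ N.root v := by
  have hwf : WellFounded
      (fun x y : N.toMDigraph.V =>
        Relation.TransGen (N.toMDigraph.DStep Set.univ) x y) := by
    haveI : IsTrans N.toMDigraph.V
        (fun x y => Relation.TransGen (N.toMDigraph.DStep Set.univ) x y) :=
      ⟨fun _ _ _ h1 h2 => h1.trans h2⟩
    haveI : IsIrrefl N.toMDigraph.V
        (fun x y => Relation.TransGen (N.toMDigraph.DStep Set.univ) x y) :=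
      ⟨fun x h => N.acyclic x h⟩
    exact Finite.wellFounded_of_trans_of_irrefl _
  refine hwf.induction v ?_
  intro x ih
  by_cases hx : x = N.root
  · rw [hx]
    exact Relation.ReflTransGen.refl
  · have hex : ∃ f, N.toMDigraph.tgt f = x := by
      by_contra hno
      push_neg at hno
      haveI : IsEmpty {f : N.toMDigraph.E // N.toMDigraph.tgt f = x} :=
        ⟨fun ⟨f, hf⟩ => hno f hf⟩
      have h0 : N.toMDigraph.inDeg x = 0 := Nat.card_of_isEmpty
      by_cases hleaf : ∃ y, x = N.leaf y
      · obtain ⟨y, rfl⟩ := hleaf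
        rw [N.leaf_in y] at h0
        exact one_ne_zero h0
      · push_neg at hleaf
        rcases N.internal x hx hleaf with ⟨h1, _⟩ | ⟨h1, _⟩ <;> omega
    obtain ⟨f, hf⟩ := hex
    have hstep : N.toMDigraph.DStep Set.univ (N.toMDigraph.src f) x :=
      ⟨f, Set.mem_univ f, rfl, hf⟩
    exact (ih _ (Relation.TransGen.single hstep)).tail hstep

open MDigraph in
lemma PhyloNetwork.cutSep_induced {X : Type} (N : PhyloNetwork X) (a b c d : X)
    (hq : CutSep (top N.toMDigraph) N.leaf a b c d) :
    CutSep (N.inducedSub {a, b, c, d}) N.leaf a b c d := by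
  classical
  obtain ⟨e, hcut, h1, h2, h3⟩ := hq
  have h1' : N.toMDigraph.Conn (Set.univ \ {e}) (N.leaf a) (N.leaf b) := h1
  have h2' : N.toMDigraph.Conn (Set.univ \ {e}) (N.leaf c) (N.leaf d) := h2
  have h3' : ¬ N.toMDigraph.Conn (Set.univ \ {e}) (N.leaf a) (N.leaf c) := h3
  have hnse : ¬ N.toMDigraph.Conn (Set.univ \ {e})
      (N.toMDigraph.src e) (N.toMDigraph.tgt e) := top_cut_sep hcut
  have hkey : ∀ y ∈ ({a, b, c, d} : Set X),
      N.toMDigraph.Conn ((N.inducedSub ({a, b, c, d} : Set X)).edges \ {e}) N.root (N.leaf y) ∨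
      (e ∈ (N.inducedSub ({a, b, c, d} : Set X)).edges ∧
        N.toMDigraph.Conn ((N.inducedSub ({a, b, c, d} : Set X)).edges \ {e}) N.root (N.toMDigraph.src e) ∧
        N.toMDigraph.Conn ((N.inducedSub ({a, b, c, d} : Set X)).edges \ {e}) (N.toMDigraph.tgt e) (N.leaf y)) := by
    intro y hy
    have hFy : {f | N.toMDigraph.DConn Set.univ (N.toMDigraph.tgt f) (N.leaf y)} ⊆ (N.inducedSub ({a, b, c, d} : Set X)).edges := by
      intro f hf
      exact ⟨y, hy, hf⟩
    have hd := dconn_restrict (N.root_above (N.leaf y))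
    have hsub : {f | N.toMDigraph.DConn Set.univ (N.toMDigraph.tgt f) (N.leaf y)} \ {e} ⊆
        (N.inducedSub ({a, b, c, d} : Set X)).edges \ {e} := by
      intro f hf
      exact ⟨hFy hf.1, hf.2⟩
    rcases dconn_split hd with hgood | ⟨heF, hu, hv⟩
    · exact Or.inl (conn_mono hsub (conn_of_dconn hgood))
    · exact Or.inr ⟨hFy heF,
        conn_mono hsub (conn_of_dconn hu),
        conn_mono hsub (conn_of_dconn hv)⟩
  have proj : ∀ {x y : N.toMDigraph.V},
      N.toMDigraph.Conn ((N.inducedSub ({a, b, c, d} : Set X)).edges \ {e}) x y →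
      N.toMDigraph.Conn (Set.univ \ {e}) x y := by
    intro x y h
    refine conn_mono ?_ h
    intro f hf
    exact ⟨trivial, hf.2⟩
  have hmem : ∀ y ∈ ({a, b, c, d} : Set X), N.leaf y ∈ (N.inducedSub ({a, b, c, d} : Set X)).verts := by
    intro y hy
    exact ⟨y, hy, Relation.ReflTransGen.refl⟩
  have ha := hkey a (by simp)
  have hb := hkey b (by simp)
  have hc := hkey c (by simp)
  have hd := hkey d (by simp)
  rcases ha with pa | ⟨haE, hase, hate⟩
  · rcases hc with pc | ⟨hcE, hcse, hcte⟩
    · exact absurd ((conn_symm (proj pa)).trans (proj pc)) h3'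
    · -- a side: root, c side: tgt e
      have pb : N.toMDigraph.Conn ((N.inducedSub ({a, b, c, d} : Set X)).edges \ {e}) N.root (N.leaf b) := by
        rcases hb with pb | ⟨_, _, hbte⟩
        · exact pb
        · exact absurd ((((conn_symm (proj hcse)).trans (proj pa)).trans h1').trans
            (conn_symm (proj hbte))) hnse
      have qd : N.toMDigraph.Conn ((N.inducedSub ({a, b, c, d} : Set X)).edges \ {e}) (N.toMDigraph.tgt e) (N.leaf d) := by
        rcases hd with pd | ⟨_, _, hdte⟩
        · exact absurd ((((conn_symm (proj hcse)).trans (proj pd)).trans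
            (conn_symm h2')).trans (conn_symm (proj hcte))) hnse
        · exact hdte
      refine ⟨e, ?_, ?_, ?_, ?_⟩
      · refine isCutEdge_of hcE (hmem a (by simp)) (hmem c (by simp)) ?_ ?_
        · have s1 : N.toMDigraph.Conn (N.inducedSub ({a, b, c, d} : Set X)).edges (N.leaf a) N.root :=
            conn_symm (conn_mono Set.diff_subset pa)
          have s2 : N.toMDigraph.Conn (N.inducedSub ({a, b, c, d} : Set X)).edges N.root (N.toMDigraph.src e) :=
            conn_mono Set.diff_subset hcse
          have s3 : N.toMDigraph.Step (N.inducedSub ({a, b, c, d} : Set X)).edges (N.toMDigraph.src e) (N.toMDigraph.tgt e) :=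
            ⟨e, hcE, Or.inl ⟨rfl, rfl⟩⟩
          have s4 : N.toMDigraph.Conn (N.inducedSub ({a, b, c, d} : Set X)).edges (N.toMDigraph.tgt e) (N.leaf c) :=
            conn_mono Set.diff_subset hcte
          exact ((s1.trans s2).tail s3).trans s4
        · exact fun hcon => h3' (proj hcon)
      · exact (conn_symm pa).trans pb
      · exact (conn_symm hcte).trans qd
      · exact fun hcon => h3' (proj hcon)
  · rcases hc with pc | ⟨hcE, hcse, hcte⟩
    · -- a side: tgt e, c side: root
      have qb : N.toMDigraph.Conn ((N.inducedSub ({a, b, c, d} : Set X)).edges \ {e}) (N.toMDigraph.tgt e) (N.leaf b) := by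
        rcases hb with pb | ⟨_, _, hbte⟩
        · exact absurd ((((conn_symm (proj hase)).trans (proj pb)).trans
            (conn_symm h1')).trans (conn_symm (proj hate))) hnse
        · exact hbte
      have pd : N.toMDigraph.Conn ((N.inducedSub ({a, b, c, d} : Set X)).edges \ {e}) N.root (N.leaf d) := by
        rcases hd with pd | ⟨_, _, hdte⟩
        · exact pd
        · exact absurd ((((conn_symm (proj hase)).trans (proj pc)).trans h2').trans
            (conn_symm (proj hdte))) hnse
      refine ⟨e, ?_, ?_, ?_, ?_⟩
      · refine isCutEdge_of haE (hmem a (by simp)) (hmem c (by simp)) ?_ ?_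
        · have s1 : N.toMDigraph.Conn (N.inducedSub ({a, b, c, d} : Set X)).edges (N.leaf a) (N.toMDigraph.tgt e) :=
            conn_symm (conn_mono Set.diff_subset hate)
          have s3 : N.toMDigraph.Step (N.inducedSub ({a, b, c, d} : Set X)).edges (N.toMDigraph.tgt e) (N.toMDigraph.src e) :=
            step_symm ⟨e, haE, Or.inl ⟨rfl, rfl⟩⟩
          have s2 : N.toMDigraph.Conn (N.inducedSub ({a, b, c, d} : Set X)).edges (N.toMDigraph.src e) N.root :=
            conn_symm (conn_mono Set.diff_subset hase)
          have s4 : N.toMDigraph.Conn (N.inducedSub ({a, b, c, d} : Set X)).edges N.root (N.leaf c) :=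
            conn_mono Set.diff_subset pc
          exact ((s1.tail s3).trans s2).trans s4
        · exact fun hcon => h3' (proj hcon)
      · exact (conn_symm hate).trans qb
      · exact (conn_symm pc).trans pd
      · exact fun hcon => h3' (proj hcon)
    · exact absurd ((conn_symm (proj hate)).trans (proj hcte)) h3'

end Helpers

/-- Let `N⁺` be a rooted binary phylogenetic network on taxon set `X` with
`|X| ≥ 4`, and let `{a,b,c,d} ⊆ X` be a T-quartet on `N⁺` whose associated
resolved quartet is `ab|cd` (i.e. the quartet displayed on `T_rd(N⁻)`: some
cut edge of the network separates `a, b` from `c, d`).  Then `{a,b,c,d}` is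
also a T-quartet on the induced 4-taxon network `N⁺_{a,b,c,d}`, with the same
associated resolved quartet `ab|cd`. -/
theorem stmt_19 {X : Type} (N : PhyloNetwork X) (a b c d : X)
    (hpair : List.Pairwise (· ≠ ·) [a, b, c, d])
    (hT : ¬ BQuartetIn (top N.toMDigraph) N.leaf a b c d)
    (hq : CutSep (top N.toMDigraph) N.leaf a b c d) :
    ¬ BQuartetIn (N.inducedSub {a, b, c, d}) N.leaf a b c d ∧
    CutSep (N.inducedSub {a, b, c, d}) N.leaf a b c d := by
  have hq' := N.cutSep_induced a b c d hq
  simp only [List.pairwise_cons, List.mem_cons, List.not_mem_nil, or_false] at hpair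
  have hab : a ≠ b := hpair.1 b (Or.inl rfl)
  have hcd : c ≠ d := hpair.2.2.1 d rfl
  exact ⟨cutSep_not_bquartet hab hcd hq', hq'⟩
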